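/- Let $(U_n,V_n)$ be random elements such that $U_n\Rightarrow U$ in distribution and the conditional distribution of $V_n$ given $U_n$ converges in probability to a fixed distribution $\mathcal{L}(V)$ (i.e., $\mathbb{E}[f(V_n)\mid U_n]\to\mathbb{E}f(V)$ in probability for every bounded continuous $f$). Then $(U_n,V_n)\Rightarrow (U,V)$ with $U$ and $V$ independent; in particular $V_n\Rightarrow V$. -/

import Mathlib

open MeasureTheory Filter Set
open scoped BoundedContinuousFunction ENNReal NNReal Topology

namespace Stmt15Aux

/-- Coerce an `ℝ≥0`-valued bounded continuous function to an `ℝ`-valued one. -/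
noncomputable def toRealBCF {X : Type*} [TopologicalSpace X] (g : X →ᵇ ℝ≥0) : X →ᵇ ℝ :=
  ⟨⟨fun x => (g x : ℝ), NNReal.continuous_coe.comp g.continuous⟩, by
    obtain ⟨C, hC⟩ := g.bounded
    exact ⟨C, fun x y => by simpa [NNReal.dist_eq, Real.dist_eq] using hC x y⟩⟩

@[simp] lemma toRealBCF_apply {X : Type*} [TopologicalSpace X] (g : X →ᵇ ℝ≥0) (x : X) :
    toRealBCF g x = (g x : ℝ) := rfl

lemma integrable_of_bound {Ω : Type*} [MeasurableSpace Ω] (P : Measure Ω) [IsFiniteMeasure P]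
    {f : Ω → ℝ} (hf : AEStronglyMeasurable f P) (C : ℝ) (hC : ∀ ω, |f ω| ≤ C) :
    Integrable f P :=
  ⟨hf, HasFiniteIntegral.of_bounded (C := C)
    (Eventually.of_forall (by simpa [Real.norm_eq_abs] using hC))⟩

/-- Approximation of a closed set from above by a bounded continuous function. -/
lemma exists_bcf_closed {X : Type*} [TopologicalSpace X] [MeasurableSpace X]
    [OpensMeasurableSpace X] [HasOuterApproxClosed X] (μ : Measure X) [IsFiniteMeasure μ]
    {F : Set X} (hF : IsClosed F) {ε : ℝ} (hε : 0 < ε) :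
    ∃ h : X →ᵇ ℝ, (∀ x, 0 ≤ h x) ∧ (∀ x, h x ≤ 1) ∧ (∀ x ∈ F, h x = 1) ∧
      ∫ x, h x ∂μ ≤ (μ F).toReal + ε := by
  have htend := HasOuterApproxClosed.tendsto_lintegral_apprSeq hF μ
  have hlt : μ F < μ F + ENNReal.ofReal ε :=
    ENNReal.lt_add_right (measure_ne_top μ F) (by simpa [ENNReal.ofReal_eq_zero] using hε)
  have hev : ∀ᶠ n in atTop, ∫⁻ x, (hF.apprSeq n x : ℝ≥0∞) ∂μ < μ F + ENNReal.ofReal ε :=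
    htend.eventually_lt_const hlt
  obtain ⟨n, hn⟩ := hev.exists
  refine ⟨toRealBCF (hF.apprSeq n), fun x => (hF.apprSeq n x).coe_nonneg,
    fun x => ?_, fun x hx => ?_, ?_⟩
  · exact_mod_cast HasOuterApproxClosed.apprSeq_apply_le_one hF n x
  · have := HasOuterApproxClosed.apprSeq_apply_eq_one hF n hx
    simp [toRealBCF_apply, this]
  · have hnn : 0 ≤ᵐ[μ] fun x => (toRealBCF (hF.apprSeq n)) x :=
      Eventually.of_forall fun x => (hF.apprSeq n x).coe_nonneg
    rw [integral_eq_lintegral_of_nonneg_ae hnn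
      ((toRealBCF (hF.apprSeq n)).continuous.measurable.aestronglyMeasurable)]
    have : ∀ x, ENNReal.ofReal ((toRealBCF (hF.apprSeq n)) x) = (hF.apprSeq n x : ℝ≥0∞) := by
      intro x; simp [ENNReal.ofReal_coe_nnreal]
    simp_rw [this]
    calc (∫⁻ x, (hF.apprSeq n x : ℝ≥0∞) ∂μ).toReal
        ≤ (μ F + ENNReal.ofReal ε).toReal := ENNReal.toReal_mono (by finiteness) hn.le
      _ = (μ F).toReal + ε := by
          rw [ENNReal.toReal_add (measure_ne_top μ F) ENNReal.ofReal_ne_top,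
            ENNReal.toReal_ofReal hε.le]

/-- Approximation of an open set from below by a bounded continuous function. -/
lemma exists_bcf_open {X : Type*} [TopologicalSpace X] [MeasurableSpace X]
    [OpensMeasurableSpace X] [HasOuterApproxClosed X] [BorelSpace X] (μ : Measure X)
    [IsProbabilityMeasure μ]
    {G : Set X} (hG : IsOpen G) {ε : ℝ} (hε : 0 < ε) :
    ∃ h : X →ᵇ ℝ, (∀ x, 0 ≤ h x) ∧ (∀ x, h x ≤ 1) ∧ (∀ x ∉ G, h x = 0) ∧
      (μ G).toReal - ε ≤ ∫ x, h x ∂μ := by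
  obtain ⟨h₁, h₁0, h₁1, h₁F, h₁int⟩ := exists_bcf_closed μ hG.isClosed_compl hε
  set h : X →ᵇ ℝ := BoundedContinuousFunction.const X 1 - h₁ with hh
  have happ : ∀ x, h x = 1 - h₁ x := fun x => by simp [hh]
  refine ⟨h, fun x => ?_, fun x => ?_, fun x hx => ?_, ?_⟩
  · rw [happ]; linarith [h₁1 x]
  · rw [happ]; linarith [h₁0 x]
  · rw [happ, h₁F x hx]; ring
  · have hint : Integrable (fun x => h₁ x) μ := h₁.integrable μ
    have hie : ∫ x, h x ∂μ = 1 - ∫ x, h₁ x ∂μ := by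
      simp_rw [happ]
      rw [integral_sub (integrable_const 1) hint]
      simp
    rw [hie]
    have hc : (μ Gᶜ).toReal = 1 - (μ G).toReal := by
      rw [measure_compl hG.measurableSet (measure_ne_top μ G), measure_univ,
        ENNReal.toReal_sub_of_le prob_le_one ENNReal.one_ne_top, ENNReal.toReal_one]
    rw [hc] at h₁int
    linarith

/-- L¹ convergence from convergence in probability with a uniform (a.e.) bound. -/
lemma L1_tendsto_of_in_prob {Ω : ℕ → Type*} [∀ n, MeasurableSpace (Ω n)]
    (P : ∀ n, Measure (Ω n)) [∀ n, IsProbabilityMeasure (P n)]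
    (X : ∀ n, Ω n → ℝ) (hXm : ∀ n, Measurable (X n))
    (c : ℝ) (C : ℝ) (hXbd : ∀ n, ∀ᵐ ω ∂P n, |X n ω| ≤ C) (hcC : |c| ≤ C)
    (hcond : ∀ ε > (0:ℝ), Tendsto (fun n =>
        P n {ω | ε ≤ |X n ω - c|}) atTop (nhds 0)) :
    Tendsto (fun n => ∫ ω, |X n ω - c| ∂P n) atTop (𝓝 0) := by
  have hC0 : 0 ≤ C := le_trans (abs_nonneg _) hcC
  set M : ℝ := 2 * C + 1 with hM
  have hM0 : 0 < M := by positivity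
  rw [NormedAddCommGroup.tendsto_nhds_zero]
  intro ε hε
  have hε2 : 0 < ε / 2 := by positivity
  set E : ∀ n, Set (Ω n) := fun n => {ω | ε / 2 ≤ |X n ω - c|} with hE
  have hEmeas : ∀ n, MeasurableSet (E n) := by
    intro n
    exact ((hXm n).sub measurable_const).abs measurableSet_Ici
  have hptend : Tendsto (fun n => (P n (E n)).toReal) atTop (𝓝 (0:ℝ)) := by
    have := (ENNReal.tendsto_toReal (by simp)).comp (hcond (ε/2) hε2)
    exact this
  have hMp : Tendsto (fun n => ε / 2 + M * (P n (E n)).toReal) atTop (𝓝 (ε/2 + M * 0)) :=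
    tendsto_const_nhds.add (hptend.const_mul M)
  have hev : ∀ᶠ n in atTop, ε / 2 + M * (P n (E n)).toReal < ε := by
    apply hMp.eventually_lt_const
    simp only [mul_zero, add_zero]
    linarith
  filter_upwards [hev] with n hn
  have hXint : Integrable (fun ω => |X n ω - c|) (P n) := by
    refine Integrable.abs (Integrable.sub ?_ (integrable_const c))
    refine ⟨(hXm n).aestronglyMeasurable, ?_⟩
    apply HasFiniteIntegral.of_bounded (C := C)
    filter_upwards [hXbd n] with ω hω using by simpa [Real.norm_eq_abs] using hω
  have hRint : Integrable (fun ω => ε / 2 + (E n).indicator (fun _ => M) ω) (P n) :=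
    (integrable_const _).add ((integrable_const M).indicator (hEmeas n))
  have hmono : ∫ ω, |X n ω - c| ∂P n
      ≤ ∫ ω, (ε / 2 + (E n).indicator (fun _ => M) ω) ∂P n := by
    apply integral_mono_ae hXint hRint
    filter_upwards [hXbd n] with ω hω
    by_cases hωE : ω ∈ E n
    · rw [indicator_of_mem hωE]
      have h1 : |X n ω - c| ≤ |X n ω| + |c| := abs_sub _ _
      have h2 : |X n ω - c| ≤ M := by rw [hM]; linarith
      linarith
    · rw [indicator_of_notMem hωE, add_zero]
      have : ¬ (ε / 2 ≤ |X n ω - c|) := hωE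
      linarith [not_le.mp this]
  have hRval : ∫ ω, (ε / 2 + (E n).indicator (fun _ => M) ω) ∂P n
      = ε / 2 + M * (P n (E n)).toReal := by
    rw [integral_add (integrable_const _) ((integrable_const M).indicator (hEmeas n)),
      integral_indicator_const _ (hEmeas n)]
    simp [mul_comm, measureReal_def]
  have hnn : 0 ≤ ∫ ω, |X n ω - c| ∂P n := integral_nonneg fun ω => abs_nonneg _
  rw [Real.norm_eq_abs, abs_of_nonneg hnn]
  calc ∫ ω, |X n ω - c| ∂P n
      ≤ ε / 2 + M * (P n (E n)).toReal := hmono.trans_eq hRval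
    _ < ε := hn

/-- Key decoupling lemma: the integral of `1_A(Uₙ)·h(Vₙ)` is asymptotically
`P(Uₙ ∈ A)·∫h dμV`. -/
lemma keyC {S S' : Type*} [MeasurableSpace S]
    [TopologicalSpace S'] [MeasurableSpace S'] [OpensMeasurableSpace S']
    {Ω : ℕ → Type*} [mΩ : ∀ n, MeasurableSpace (Ω n)]
    (P : ∀ n, Measure (Ω n)) [∀ n, IsProbabilityMeasure (P n)]
    (U : ∀ n, Ω n → S) (V : ∀ n, Ω n → S')
    (hU : ∀ n, Measurable (U n)) (hV : ∀ n, Measurable (V n))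
    (μV : Measure S') [IsProbabilityMeasure μV]
    (h : S' →ᵇ ℝ)
    (hcond : ∀ ε > (0 : ℝ),
      Tendsto (fun n =>
          P n {ω | ε ≤
            |((P n)[(fun ω => h (V n ω)) |
                MeasurableSpace.comap (U n) inferInstance]) ω - ∫ y, h y ∂μV|})
        atTop (nhds 0))
    (A : Set S) (hA : MeasurableSet A) :
    Tendsto (fun n => ∫ ω, (U n ⁻¹' A).indicator (fun _ => (1:ℝ)) ω * h (V n ω) ∂P n
        - ((P n) (U n ⁻¹' A)).toReal * ∫ y, h y ∂μV) atTop (𝓝 0) := by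
  set c : ℝ := ∫ y, h y ∂μV with hc
  set X : ∀ n, Ω n → ℝ := fun n =>
    (P n)[(fun ω => h (V n ω)) | MeasurableSpace.comap (U n) inferInstance] with hX
  have hm : ∀ n, MeasurableSpace.comap (U n) inferInstance ≤ mΩ n := fun n => (hU n).comap_le
  haveI : ∀ n, SigmaFinite ((P n).trim (hm n)) := fun n => by
    have : IsFiniteMeasure ((P n).trim (hm n)) := MeasureTheory.isFiniteMeasure_trim _
    infer_instance
  have hfmeas : ∀ n, Measurable (fun ω => h (V n ω)) := fun n =>
    h.continuous.measurable.comp (hV n)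
  have hfbd : ∀ n ω, |h (V n ω)| ≤ ‖h‖ := fun n ω => by
    rw [← Real.norm_eq_abs]; exact h.norm_coe_le_norm _
  have hfint : ∀ n, Integrable (fun ω => h (V n ω)) (P n) := fun n =>
    integrable_of_bound (P n) (hfmeas n).aestronglyMeasurable ‖h‖ (hfbd n)
  have hXmeas : ∀ n, Measurable (X n) := fun n =>
    (stronglyMeasurable_condExp.mono (hm n)).measurable
  have hXbd : ∀ n, ∀ᵐ ω ∂P n, |X n ω| ≤ ‖h‖ := by
    intro n
    have hb : ∀ᵐ ω ∂P n, |h (V n ω)| ≤ (‖h‖₊ : ℝ) :=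
      Eventually.of_forall fun ω => by simpa [coe_nnnorm] using hfbd n ω
    have := ae_bdd_condExp_of_ae_bdd (m := MeasurableSpace.comap (U n) inferInstance)
      (μ := P n) hb
    simpa [coe_nnnorm] using this
  have hcabs : |c| ≤ ‖h‖ := by
    rw [hc, ← Real.norm_eq_abs]
    calc ‖∫ y, h y ∂μV‖ ≤ ∫ y, ‖h y‖ ∂μV := norm_integral_le_integral_norm _
      _ ≤ ∫ _y, ‖h‖ ∂μV := by
          apply integral_mono _ (integrable_const _) (fun y => h.norm_coe_le_norm y)
          exact (integrable_of_bound μV h.continuous.measurable.aestronglyMeasurable ‖h‖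
            (fun y => by rw [← Real.norm_eq_abs]; exact h.norm_coe_le_norm y)).norm
      _ = ‖h‖ := by simp
  have hD := L1_tendsto_of_in_prob P X hXmeas c ‖h‖ hXbd hcabs hcond
  apply squeeze_zero_norm _ hD
  intro n
  set s : Set (Ω n) := U n ⁻¹' A with hs
  have hsmeas : MeasurableSet s := (hU n) hA
  have hsm : MeasurableSet[MeasurableSpace.comap (U n) inferInstance] s := ⟨A, hA, rfl⟩
  have step1 : ∫ ω, s.indicator (fun _ => (1:ℝ)) ω * h (V n ω) ∂P n
      = ∫ ω in s, h (V n ω) ∂P n := by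
    rw [← integral_indicator hsmeas]
    congr 1
    ext ω
    by_cases hω : ω ∈ s <;> simp [indicator, hω]
  have step2 : ∫ ω in s, h (V n ω) ∂P n = ∫ ω in s, X n ω ∂P n :=
    (setIntegral_condExp (hm n) (hfint n) hsm).symm
  have step3 : ((P n) s).toReal * c = ∫ _ω in s, c ∂P n := by
    rw [setIntegral_const]
    simp [smul_eq_mul, measureReal_def]
  have step4 : ∫ ω in s, X n ω ∂P n - ∫ _ω in s, c ∂P n = ∫ ω in s, (X n ω - c) ∂P n :=
    (integral_sub (integrable_condExp.integrableOn)
      (integrableOn_const (C := c) (measure_lt_top _ _).ne)).symm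
  rw [Real.norm_eq_abs, step1, step2, step3, step4]
  calc |∫ ω in s, (X n ω - c) ∂P n| ≤ ∫ ω in s, |X n ω - c| ∂P n := by
        rw [← Real.norm_eq_abs]
        exact (norm_integral_le_integral_norm _).trans (le_of_eq (by simp [Real.norm_eq_abs]))
    _ ≤ ∫ ω, |X n ω - c| ∂P n := by
        apply setIntegral_le_integral
        · exact ((integrable_condExp.sub (integrable_const c)).abs)
        · exact Eventually.of_forall fun ω => abs_nonneg _

lemma toReal_union {X : Type*} [MeasurableSpace X] (μ : Measure X) [IsFiniteMeasure μ]
    {s t : Set X} (ht : MeasurableSet t) :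
    (μ (s ∪ t)).toReal = (μ s).toReal + (μ t).toReal - (μ (s ∩ t)).toReal := by
  have h := measure_union_add_inter (μ := μ) s ht
  have h2 := congrArg ENNReal.toReal h
  rw [ENNReal.toReal_add (measure_ne_top μ _) (measure_ne_top μ _),
    ENNReal.toReal_add (measure_ne_top μ _) (measure_ne_top μ _)] at h2
  linarith

lemma frontier_inter_null {X : Type*} [TopologicalSpace X] [MeasurableSpace X]
    (μ : Measure X) {s t : Set X} (hs : μ (frontier s) = 0) (ht : μ (frontier t) = 0) :
    μ (frontier (s ∩ t)) = 0 := by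
  have hsub : frontier (s ∩ t) ⊆ frontier s ∪ frontier t := by
    calc frontier (s ∩ t)
        ⊆ frontier s ∩ closure t ∪ closure s ∩ frontier t := frontier_inter_subset s t
      _ ⊆ frontier s ∪ frontier t :=
          union_subset_union inter_subset_left inter_subset_right
  exact measure_mono_null hsub (measure_union_null hs ht)

end Stmt15Aux

open Stmt15Aux

set_option maxHeartbeats 2000000 in
/-- Lemma on asymptotic independence: if `U_n ⇒ U` in distribution
and the conditional law of `V_n` given `U_n` converges in probability to a fixed
law `L(V)` (in the sense that `E[f(V_n)∣U_n] → E f(V)` in probability for every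
bounded continuous `f`), then `(U_n, V_n) ⇒ (U, V)` with `U, V` independent;
in particular `V_n ⇒ V`. -/
theorem stmt15 {S S' : Type*}
    [TopologicalSpace S] [PolishSpace S] [MeasurableSpace S] [BorelSpace S]
    [TopologicalSpace S'] [PolishSpace S'] [MeasurableSpace S'] [BorelSpace S']
    {Ω : ℕ → Type*} [∀ n, MeasurableSpace (Ω n)]
    (P : ∀ n, Measure (Ω n)) [∀ n, IsProbabilityMeasure (P n)]
    (U : ∀ n, Ω n → S) (V : ∀ n, Ω n → S')
    (hU : ∀ n, Measurable (U n)) (hV : ∀ n, Measurable (V n))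
    (μU : Measure S) (μV : Measure S')
    [IsProbabilityMeasure μU] [IsProbabilityMeasure μV]
    (hUconv : ∀ f : S →ᵇ ℝ,
      Tendsto (fun n => ∫ ω, f (U n ω) ∂P n) atTop (nhds (∫ x, f x ∂μU)))
    (hVcond : ∀ f : S' →ᵇ ℝ, ∀ ε > (0 : ℝ),
      Tendsto (fun n =>
          P n {ω | ε ≤
            |((P n)[(fun ω => f (V n ω)) |
                MeasurableSpace.comap (U n) inferInstance]) ω - ∫ y, f y ∂μV|})
        atTop (nhds 0)) :
    ∀ g : (S × S') →ᵇ ℝ,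
      Tendsto (fun n => ∫ ω, g (U n ω, V n ω) ∂P n) atTop
        (nhds (∫ p, g p ∂(μU.prod μV))) := by
  letI := TopologicalSpace.upgradeIsCompletelyMetrizable S
  letI := TopologicalSpace.upgradeIsCompletelyMetrizable S'
  -- the joint laws
  set W : ∀ n, Ω n → S × S' := fun n ω => (U n ω, V n ω) with hWdef
  have hWmeas : ∀ n, Measurable (W n) := fun n => (hU n).prodMk (hV n)
  set μn : ℕ → Measure (S × S') := fun n => (P n).map (W n) with hμndef
  haveI hμnprob : ∀ n, IsProbabilityMeasure (μn n) := fun n =>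
    Measure.isProbabilityMeasure_map (hWmeas n).aemeasurable
  set μI : Measure (S × S') := μU.prod μV with hμIdef
  -- U-side weak convergence of laws
  set νU : ℕ → ProbabilityMeasure S := fun n =>
    ⟨(P n).map (U n), Measure.isProbabilityMeasure_map (hU n).aemeasurable⟩ with hνUdef
  set νUinf : ProbabilityMeasure S := ⟨μU, inferInstance⟩ with hνUinfdef
  have hνU : Tendsto νU atTop (𝓝 νUinf) := by
    rw [ProbabilityMeasure.tendsto_iff_forall_integral_tendsto]
    intro f
    have key : ∀ n, ∫ x, f x ∂((νU n : Measure S)) = ∫ ω, f (U n ω) ∂P n := fun n =>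
      integral_map (hU n).aemeasurable f.continuous.measurable.aestronglyMeasurable
    have : (νUinf : Measure S) = μU := rfl
    rw [this]
    exact (hUconv f).congr fun n => (key n).symm
  -- convergence of probabilities of continuity sets on the U side
  have hUset : ∀ A : Set S, MeasurableSet A → μU (frontier A) = 0 →
      Tendsto (fun n => ((P n) (U n ⁻¹' A)).toReal) atTop (𝓝 (μU A).toReal) := by
    intro A hA hfr
    have h0 : (νUinf : Measure S) (frontier A) = 0 := hfr
    have h1 := ProbabilityMeasure.tendsto_measure_of_null_frontier_of_tendsto' hνU h0
    have h2 := (ENNReal.tendsto_toReal (measure_ne_top (νUinf : Measure S) A)).comp h1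
    refine h2.congr fun n => ?_
    show (((νU n : Measure S)) A).toReal = ((P n) (U n ⁻¹' A)).toReal
    have : (νU n : Measure S) = (P n).map (U n) := rfl
    rw [this, Measure.map_apply (hU n) hA]
  -- rectangle convergence
  have hrect : ∀ (A : Set S) (B : Set S'), MeasurableSet A → MeasurableSet B →
      μU (frontier A) = 0 → μV (frontier B) = 0 →
      Tendsto (fun n => (μn n (A ×ˢ B)).toReal) atTop (𝓝 ((μI (A ×ˢ B)).toReal)) := by
    intro A B hA hB hfrA hfrB
    have hprodval : (μI (A ×ˢ B)).toReal = (μU A).toReal * (μV B).toReal := by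
      rw [hμIdef, Measure.prod_prod, ENNReal.toReal_mul]
    set a : ℝ := (μU A).toReal with hadef
    set bb : ℝ := (μV B).toReal with hbbdef
    have ha0 : 0 ≤ a := ENNReal.toReal_nonneg
    have ha1 : a ≤ 1 := by
      have h1 : μU A ≤ 1 := prob_le_one
      calc a ≤ (1 : ℝ≥0∞).toReal := ENNReal.toReal_mono ENNReal.one_ne_top h1
        _ = 1 := by simp
    have hb0 : 0 ≤ bb := ENNReal.toReal_nonneg
    have hb1 : bb ≤ 1 := by
      have h1 : μV B ≤ 1 := prob_le_one
      calc bb ≤ (1 : ℝ≥0∞).toReal := ENNReal.toReal_mono ENNReal.one_ne_top h1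
        _ = 1 := by simp
    have hclB : μV (closure B) = μV B := by
      apply le_antisymm _ (measure_mono subset_closure)
      calc μV (closure B) ≤ μV (B ∪ frontier B) := by
            apply measure_mono
            intro x hx
            by_cases hxB : x ∈ B
            · exact Or.inl hxB
            · exact Or.inr ⟨hx, fun hint => hxB (interior_subset hint)⟩
        _ ≤ μV B + μV (frontier B) := measure_union_le _ _
        _ = μV B := by rw [hfrB, add_zero]
    have hintB : μV (interior B) = μV B := by
      apply le_antisymm (measure_mono interior_subset)
      calc μV B ≤ μV (interior B ∪ frontier B) := by
            apply measure_mono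
            intro x hxB
            by_cases hxi : x ∈ interior B
            · exact Or.inl hxi
            · exact Or.inr ⟨subset_closure hxB, hxi⟩
        _ ≤ μV (interior B) + μV (frontier B) := measure_union_le _ _
        _ = μV (interior B) := by rw [hfrB, add_zero]
    rw [Metric.tendsto_atTop]
    intro ε hε
    set ε' : ℝ := min (ε/4) 1 with hε'def
    have hε'0 : 0 < ε' := lt_min (by positivity) one_pos
    have hε'1 : ε' ≤ ε / 4 := min_le_left _ _
    obtain ⟨hp, hp0, hp1, hpF, hpint⟩ := exists_bcf_closed μV isClosed_closure (F := closure B) hε'0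
    obtain ⟨hq, hq0, hq1, hqO, hqint⟩ := exists_bcf_open μV isOpen_interior (G := interior B) hε'0
    set cp : ℝ := ∫ y, hp y ∂μV with hcpdef
    set cq : ℝ := ∫ y, hq y ∂μV with hcqdef
    have hcp_le : cp ≤ bb + ε' := by
      rw [hclB] at hpint; exact hpint
    have hcp0 : 0 ≤ cp := integral_nonneg hp0
    have hcq_ge : bb - ε' ≤ cq := by
      rw [hintB] at hqint; exact hqint
    have hcq0 : 0 ≤ cq := integral_nonneg hq0
    have hcq1 : cq ≤ 1 := by
      calc cq ≤ ∫ _y, (1:ℝ) ∂μV := integral_mono (hq.integrable μV) (integrable_const 1) hq1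
        _ = 1 := by simp
    have hdp := keyC P U V hU hV μV hp (hVcond hp) A hA
    have hdq := keyC P U V hU hV μV hq (hVcond hq) A hA
    have han := hUset A hA hfrA
    rw [Metric.tendsto_atTop] at hdp hdq han
    obtain ⟨N1, hN1⟩ := han ε' hε'0
    obtain ⟨N2, hN2⟩ := hdp ε' hε'0
    obtain ⟨N3, hN3⟩ := hdq ε' hε'0
    refine ⟨max N1 (max N2 N3), fun n hn => ?_⟩
    have hn1 := hN1 n (le_trans (le_max_left _ _) hn)
    have hn2 := hN2 n (le_trans ((le_max_left _ _).trans (le_max_right _ _)) hn)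
    have hn3 := hN3 n (le_trans ((le_max_right _ _).trans (le_max_right _ _)) hn)
    rw [Real.dist_eq] at hn1 hn2 hn3 ⊢
    rw [sub_zero] at hn2 hn3
    rw [← hcpdef] at hn2
    rw [← hcqdef] at hn3
    rw [← hadef] at hn1
    set s : Set (Ω n) := U n ⁻¹' A with hsdef
    set t : Set (Ω n) := V n ⁻¹' B with htdef
    have hsmeas : MeasurableSet s := (hU n) hA
    have htmeas : MeasurableSet t := (hV n) hB
    set an : ℝ := ((P n) s).toReal with handef
    have han0 : 0 ≤ an := ENNReal.toReal_nonneg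
    have han1 : an ≤ 1 := by
      have h1 : (P n) s ≤ 1 := prob_le_one
      calc an ≤ (1 : ℝ≥0∞).toReal := ENNReal.toReal_mono ENNReal.one_ne_top h1
        _ = 1 := by simp
    -- value of the measure of the rectangle
    have hval : (μn n (A ×ˢ B)).toReal = ((P n) (s ∩ t)).toReal := by
      rw [hμndef]
      simp only
      rw [Measure.map_apply (hWmeas n) (hA.prod hB)]
      congr 1
    set xn : ℝ := ((P n) (s ∩ t)).toReal with hxndef
    -- integral representation
    have hxint : xn = ∫ ω, s.indicator (fun _ => (1:ℝ)) ω *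
        B.indicator (fun _ => (1:ℝ)) (V n ω) ∂P n := by
      have heq : (fun ω => s.indicator (fun _ => (1:ℝ)) ω *
          B.indicator (fun _ => (1:ℝ)) (V n ω)) = (s ∩ t).indicator (fun _ => (1:ℝ)) := by
        ext ω
        by_cases hω1 : ω ∈ s <;> by_cases hω2 : ω ∈ t
        · have : V n ω ∈ B := hω2
          simp [indicator, hω1, hω2, this]
        · have : V n ω ∉ B := hω2
          simp [indicator, hω1, hω2, this]
        · have : V n ω ∈ B := hω2
          simp [indicator, hω1, hω2, this]
        · have : V n ω ∉ B := hω2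
          simp [indicator, hω1, hω2, this]
      rw [heq, integral_indicator_const _ (hsmeas.inter htmeas)]
      simp [hxndef, smul_eq_mul, measureReal_def]
    -- comparison with the continuous approximations
    have hsind_meas : Measurable (s.indicator (fun _ => (1:ℝ))) :=
      measurable_const.indicator hsmeas
    have hintp : Integrable (fun ω => s.indicator (fun _ => (1:ℝ)) ω * hp (V n ω)) (P n) := by
      apply integrable_of_bound (P n)
        ((hsind_meas.mul (hp.continuous.measurable.comp (hV n))).aestronglyMeasurable) (1 + ‖hp‖)
      intro ω
      rw [Pi.mul_apply, Function.comp_apply, abs_mul]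
      have h1 : |s.indicator (fun _ => (1:ℝ)) ω| ≤ 1 := by
        by_cases hω : ω ∈ s <;> simp [indicator, hω]
      have h2 : |hp (V n ω)| ≤ ‖hp‖ := by
        rw [← Real.norm_eq_abs]; exact hp.norm_coe_le_norm _
      calc |s.indicator (fun _ => (1:ℝ)) ω| * |hp (V n ω)|
          ≤ 1 * ‖hp‖ := mul_le_mul h1 h2 (abs_nonneg _) zero_le_one
        _ ≤ 1 + ‖hp‖ := by linarith [norm_nonneg hp]
    have hintq : Integrable (fun ω => s.indicator (fun _ => (1:ℝ)) ω * hq (V n ω)) (P n) := by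
      apply integrable_of_bound (P n)
        ((hsind_meas.mul (hq.continuous.measurable.comp (hV n))).aestronglyMeasurable) (1 + ‖hq‖)
      intro ω
      rw [Pi.mul_apply, Function.comp_apply, abs_mul]
      have h1 : |s.indicator (fun _ => (1:ℝ)) ω| ≤ 1 := by
        by_cases hω : ω ∈ s <;> simp [indicator, hω]
      have h2 : |hq (V n ω)| ≤ ‖hq‖ := by
        rw [← Real.norm_eq_abs]; exact hq.norm_coe_le_norm _
      calc |s.indicator (fun _ => (1:ℝ)) ω| * |hq (V n ω)|
          ≤ 1 * ‖hq‖ := mul_le_mul h1 h2 (abs_nonneg _) zero_le_one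
        _ ≤ 1 + ‖hq‖ := by linarith [norm_nonneg hq]
    have hintind : Integrable (fun ω => s.indicator (fun _ => (1:ℝ)) ω *
        B.indicator (fun _ => (1:ℝ)) (V n ω)) (P n) := by
      apply integrable_of_bound (P n)
        ((hsind_meas.mul ((measurable_const.indicator hB).comp (hV n))).aestronglyMeasurable) 1
      intro ω
      rw [Pi.mul_apply, Function.comp_apply, abs_mul]
      have h1 : |s.indicator (fun _ => (1:ℝ)) ω| ≤ 1 := by
        by_cases hω : ω ∈ s <;> simp [indicator, hω]
      have h2 : |B.indicator (fun _ => (1:ℝ)) (V n ω)| ≤ 1 := by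
        by_cases hω : V n ω ∈ B <;> simp [indicator, hω]
      calc |s.indicator (fun _ => (1:ℝ)) ω| * |B.indicator (fun _ => (1:ℝ)) (V n ω)|
          ≤ 1 * 1 := mul_le_mul h1 h2 (abs_nonneg _) zero_le_one
        _ = 1 := by ring
    have hup : xn ≤ ∫ ω, s.indicator (fun _ => (1:ℝ)) ω * hp (V n ω) ∂P n := by
      rw [hxint]
      apply integral_mono hintind hintp
      intro ω
      have hind0 : 0 ≤ s.indicator (fun _ => (1:ℝ)) ω := by
        by_cases hω : ω ∈ s <;> simp [indicator, hω]
      apply mul_le_mul_of_nonneg_left _ hind0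
      by_cases hω : V n ω ∈ B
      · have : hp (V n ω) = 1 := hpF _ (subset_closure hω)
        simp [indicator, hω, this]
      · simp only [indicator, hω, if_false]
        exact hp0 _
    have hlo : ∫ ω, s.indicator (fun _ => (1:ℝ)) ω * hq (V n ω) ∂P n ≤ xn := by
      rw [hxint]
      apply integral_mono hintq hintind
      intro ω
      have hind0 : 0 ≤ s.indicator (fun _ => (1:ℝ)) ω := by
        by_cases hω : ω ∈ s <;> simp [indicator, hω]
      apply mul_le_mul_of_nonneg_left _ hind0
      by_cases hω : V n ω ∈ B
      · have : hq (V n ω) ≤ 1 := hq1 _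
        simp only [indicator, hω, if_true]
        exact this
      · have hωint : V n ω ∉ interior B := fun hc => hω (interior_subset hc)
        have : hq (V n ω) = 0 := hqO _ hωint
        simp [indicator, hω, this]
    -- put everything together
    have hup2 : xn ≤ an * cp + ε' := by
      have := abs_lt.mp hn2
      have h2 : ∫ ω, s.indicator (fun _ => (1:ℝ)) ω * hp (V n ω) ∂P n < an * cp + ε' := by
        linarith [this.2]
      linarith
    have hlo2 : an * cq - ε' ≤ xn := by
      have := abs_lt.mp hn3
      have h2 : an * cq - ε' < ∫ ω, s.indicator (fun _ => (1:ℝ)) ω * hq (V n ω) ∂P n := by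
        linarith [this.1]
      linarith
    have haan := abs_lt.mp hn1
    -- bound |xn - a * bb|
    have hup3 : an * (cp - bb) ≤ ε' := by
      rcases le_total (cp - bb) 0 with hsign | hsign
      · nlinarith
      · nlinarith
    have hup4 : (an - a) * bb ≤ ε' := by
      rcases le_total (an - a) 0 with hsign | hsign
      · nlinarith
      · nlinarith [haan.2]
    have hlo3 : -ε' ≤ an * (cq - bb) := by
      rcases le_total (cq - bb) 0 with hsign | hsign
      · nlinarith [hcq_ge]
      · nlinarith
    have hlo4 : -ε' ≤ (an - a) * bb := by
      rcases le_total (an - a) 0 with hsign | hsign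
      · nlinarith [haan.1]
      · nlinarith
    rw [hval, hprodval]
    rw [abs_lt]
    constructor
    · -- -(ε) < xn - a * bb
      have : xn - a * bb ≥ an * (cq - bb) + (an - a) * bb - ε' := by nlinarith
      have hε4 : ε' ≤ ε / 4 := hε'1
      linarith
    · have : xn - a * bb ≤ an * (cp - bb) + (an - a) * bb + ε' := by nlinarith
      have hε4 : ε' ≤ ε / 4 := hε'1
      linarith
  -- finite unions of continuity rectangles
  have hfin : ∀ (k : ℕ) (A : ℕ → Set S) (B : ℕ → Set S'),
      (∀ i, MeasurableSet (A i)) → (∀ i, MeasurableSet (B i)) →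
      (∀ i, μU (frontier (A i)) = 0) → (∀ i, μV (frontier (B i)) = 0) →
      Tendsto (fun n => (μn n (⋃ i ∈ Finset.range k, A i ×ˢ B i)).toReal) atTop
        (𝓝 ((μI (⋃ i ∈ Finset.range k, A i ×ˢ B i)).toReal)) := by
    intro k
    induction k with
    | zero =>
      intro A B _ _ _ _
      simp
    | succ k ih =>
      intro A B hA hB hfA hfB
      have hmeas_r : MeasurableSet (A k ×ˢ B k) := (hA k).prod (hB k)
      have hsetid : ∀ (f : ℕ → Set (S × S')),
          (⋃ i ∈ Finset.range (k+1), f i) = (⋃ i ∈ Finset.range k, f i) ∪ f k := by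
        intro f
        rw [Finset.range_add_one, Finset.set_biUnion_insert]
        exact union_comm _ _
      have hinter : (⋃ i ∈ Finset.range k, A i ×ˢ B i) ∩ (A k ×ˢ B k)
          = ⋃ i ∈ Finset.range k, (A i ∩ A k) ×ˢ (B i ∩ B k) := by
        rw [Set.iUnion₂_inter]
        simp only [Set.prod_inter_prod]
      have hrk := ih A B hA hB hfA hfB
      have hrkk := hrect (A k) (B k) (hA k) (hB k) (hfA k) (hfB k)
      have hintR := ih (fun i => A i ∩ A k) (fun i => B i ∩ B k)
        (fun i => (hA i).inter (hA k)) (fun i => (hB i).inter (hB k))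
        (fun i => frontier_inter_null μU (hfA i) (hfA k))
        (fun i => frontier_inter_null μV (hfB i) (hfB k))
      rw [← hinter] at hintR
      have hgoal := (hrk.add hrkk).sub hintR
      have heqn : ∀ n, (μn n (⋃ i ∈ Finset.range (k+1), A i ×ˢ B i)).toReal
          = (μn n (⋃ i ∈ Finset.range k, A i ×ˢ B i)).toReal + (μn n (A k ×ˢ B k)).toReal
            - (μn n ((⋃ i ∈ Finset.range k, A i ×ˢ B i) ∩ (A k ×ˢ B k))).toReal := by
        intro n
        rw [hsetid (fun i => A i ×ˢ B i), toReal_union (μn n) hmeas_r]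
      have heqI : (μI (⋃ i ∈ Finset.range (k+1), A i ×ˢ B i)).toReal
          = (μI (⋃ i ∈ Finset.range k, A i ×ˢ B i)).toReal + (μI (A k ×ˢ B k)).toReal
            - (μI ((⋃ i ∈ Finset.range k, A i ×ˢ B i) ∩ (A k ×ˢ B k))).toReal := by
        rw [hsetid (fun i => A i ×ˢ B i), toReal_union μI hmeas_r]
      rw [heqI]
      exact hgoal.congr fun n => (heqn n).symm
  -- liminf bound for open sets
  have hopen : ∀ G : Set (S × S'), IsOpen G →
      μI G ≤ atTop.liminf (fun n => μn n G) := by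
    intro G hG
    have hcov : ∀ p : S × S', p ∈ G → ∃ (A : Set S) (B : Set S'),
        IsOpen A ∧ IsOpen B ∧ μU (frontier A) = 0 ∧ μV (frontier B) = 0 ∧
        p ∈ A ×ˢ B ∧ A ×ˢ B ⊆ G := by
      intro p hp
      obtain ⟨A', B', hA'open, hB'open, hpA', hpB', hsubG⟩ :=
        isOpen_prod_iff.mp hG p.1 p.2 hp
      obtain ⟨rA, hrA0, hrAsub⟩ := Metric.isOpen_iff.mp hA'open p.1 hpA'
      obtain ⟨rB, hrB0, hrBsub⟩ := Metric.isOpen_iff.mp hB'open p.2 hpB'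
      obtain ⟨r1, hr1mem, hr1null⟩ :=
        MeasureTheory.exists_null_frontier_thickening μU {p.1} hrA0
      obtain ⟨r2, hr2mem, hr2null⟩ :=
        MeasureTheory.exists_null_frontier_thickening μV {p.2} hrB0
      refine ⟨Metric.thickening r1 {p.1}, Metric.thickening r2 {p.2},
        Metric.isOpen_thickening, Metric.isOpen_thickening, hr1null, hr2null, ?_, ?_⟩
      · constructor
        · rw [Metric.thickening_singleton]
          exact Metric.mem_ball_self hr1mem.1
        · rw [Metric.thickening_singleton]
          exact Metric.mem_ball_self hr2mem.1
      · intro q hq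
        apply hsubG
        constructor
        · apply hrAsub
          have := hq.1
          rw [Metric.thickening_singleton] at this
          exact Metric.ball_subset_ball hr1mem.2.le this
        · apply hrBsub
          have := hq.2
          rw [Metric.thickening_singleton] at this
          exact Metric.ball_subset_ball hr2mem.2.le this
    choose! RA RB hRAopen hRBopen hRAnull hRBnull hRmem hRsub using hcov
    set fam : {p : S × S' // p ∈ G} → Set (S × S') := fun p => RA p ×ˢ RB p with hfamdef
    have hfamopen : ∀ p : {p : S × S' // p ∈ G}, IsOpen (fam p) := fun p =>
      (hRAopen p p.2).prod (hRBopen p p.2)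
    obtain ⟨T, hTc, hTU⟩ := TopologicalSpace.isOpen_iUnion_countable fam hfamopen
    have hGuni : ⋃ p, fam p = G := by
      apply subset_antisymm
      · exact iUnion_subset fun p => hRsub p p.2
      · intro q hq
        exact mem_iUnion.2 ⟨⟨q, hq⟩, hRmem q hq⟩
    rcases T.eq_empty_or_nonempty with hTe | hTne
    · have : G = ∅ := by
        rw [← hGuni, ← hTU, hTe]
        simp
      rw [this]
      simp
    obtain ⟨e, he⟩ := hTc.exists_eq_range hTne
    have hGeq : G = ⋃ j : ℕ, fam (e j) := by
      rw [← hGuni, ← hTU, he, biUnion_range]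
    have hacc := tendsto_measure_iUnion_accumulate (μ := μI) (f := fun j => fam (e j))
    rw [← hGeq] at hacc
    apply le_of_tendsto hacc
    apply Eventually.of_forall
    intro k
    set R : Set (S × S') := accumulate (fun j => fam (e j)) k with hRdef
    have hReq : R = ⋃ i ∈ Finset.range (k+1), RA (e i) ×ˢ RB (e i) := by
      ext q
      simp only [hRdef, Set.mem_accumulate, hfamdef, Finset.mem_range, Nat.lt_succ_iff,
        Set.mem_iUnion, Set.mem_prod]
      tauto
    have hRG : R ⊆ G := by
      rw [hGeq]
      exact iUnion₂_subset fun i _ => subset_iUnion (fun j => fam (e j)) i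
    have htd := hfin (k+1) (fun i => RA (e i)) (fun i => RB (e i))
      (fun i => (hRAopen (e i) (e i).2).measurableSet)
      (fun i => (hRBopen (e i) (e i).2).measurableSet)
      (fun i => hRAnull (e i) (e i).2)
      (fun i => hRBnull (e i) (e i).2)
    rw [← hReq] at htd
    have h1 : Tendsto (fun n => μn n R) atTop (𝓝 (μI R)) := by
      have h2 := ENNReal.tendsto_ofReal htd
      have h3 : (fun n => ENNReal.ofReal ((μn n R).toReal)) = fun n => μn n R := by
        funext n
        exact ENNReal.ofReal_toReal (measure_ne_top _ _)
      rw [h3, ENNReal.ofReal_toReal (measure_ne_top _ _)] at h2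
      exact h2
    calc μI R = atTop.liminf (fun n => μn n R) := h1.liminf_eq.symm
      _ ≤ atTop.liminf (fun n => μn n G) :=
          liminf_le_liminf (Eventually.of_forall fun n => measure_mono hRG)
  -- conclude via portmanteau
  set nun : ℕ → ProbabilityMeasure (S × S') := fun n => ⟨μn n, hμnprob n⟩ with hnundef
  set nuinf : ProbabilityMeasure (S × S') := ⟨μI, by rw [hμIdef]; infer_instance⟩ with hnuinfdef
  have hconv : Tendsto nun atTop (𝓝 nuinf) := by
    apply tendsto_of_forall_isOpen_le_liminf
    intro G hG
    have hENN := hopen G hG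
    have aux : (ENNReal.ofNNReal (liminf (fun n => nun n G) atTop)) =
        liminf (ENNReal.ofNNReal ∘ fun n => nun n G) atTop := by
      refine Monotone.map_liminf_of_continuousAt (F := atTop) ENNReal.coe_mono
        (fun n => nun n G) ENNReal.continuous_coe.continuousAt ?_ ?_
      · exact IsBoundedUnder.isCoboundedUnder_ge ⟨1, by simp⟩
      · exact ⟨0, by simp⟩
    rw [← ENNReal.coe_le_coe, aux]
    have e1 : (ENNReal.ofNNReal (nuinf G)) = μI G :=
      ProbabilityMeasure.ennreal_coeFn_eq_coeFn_toMeasure nuinf G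
    have e2 : (ENNReal.ofNNReal ∘ fun n => nun n G) = fun n => μn n G := by
      funext n
      exact ProbabilityMeasure.ennreal_coeFn_eq_coeFn_toMeasure (nun n) G
    rw [e1, e2]
    exact hENN
  intro g
  have hg := ProbabilityMeasure.tendsto_iff_forall_integral_tendsto.mp hconv g
  have hrewrite : ∀ n, ∫ p, g p ∂((nun n : Measure (S × S'))) = ∫ ω, g (W n ω) ∂P n := by
    intro n
    have hmeq : (nun n : Measure (S × S')) = (P n).map (W n) := rfl
    rw [hmeq, integral_map (hWmeas n).aemeasurable g.continuous.measurable.aestronglyMeasurable]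
  have hlim : ∫ p, g p ∂((nuinf : Measure (S × S'))) = ∫ p, g p ∂(μU.prod μV) := rfl
  rw [← hlim]
  refine (hg.congr fun n => ?_)
  rw [hrewrite n]
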